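/- Let μ be an instance of REP over Σ with words u_start, u_end and rules w_i → w'_i for 1 ≤ i ≤ n, and let # ∉ Σ be a fresh letter. Define, with distinct variables x_1,…,x_{3n+3}: α := x_1 # x_2 # x_3 w_1 x_4 # x_5 # x_6 w_2 ⋯ x_{3n+1} # x_{3n+2} # x_{3n+3} # u_end and β := # u_start x_1 # x_2 # x_3 w'_1 x_4 # x_5 # x_6 w'_2 ⋯ w'_n x_{3n+1} # x_{3n+2} # x_{3n+3}. Then the equation α = β has a solution if and only if the equation α_μ = β_μ has an overlapping solution. -/

import Mathlib

/-!
Framework for REP (Rewriting with Programmed Rules) and the associated word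
equations α_μ = β_μ.  Constants: `Option A` models Σ ∪ {#}, where `none` is the
fresh letter `#` and `some a` embeds a ∈ Σ.  Variables are modelled by `ℕ`
(the variable x_i is `i`).
-/

namespace REP

/-- `u_end` is obtained from `u_start` by applying each of the `n` rules
`w i → w' i` (for `i = 1, …, n`) once, in order, each application replacing one
occurrence of `w i` by `w' i`. -/
def SatisfiesREP {A : Type} (n : ℕ) (ustart uend : List A) (w w' : ℕ → List A) : Prop :=
  ∃ u : ℕ → List A, u 0 = ustart ∧ u n = uend ∧
    ∀ i, 1 ≤ i → i ≤ n → ∃ s t : List A,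
      u (i - 1) = s ++ w i ++ t ∧ u i = s ++ w' i ++ t

/-- Apply a substitution (identity on constants) to a pattern. -/
def applySub {A : Type} (h : ℕ → List (Option A)) : List (Option A ⊕ ℕ) → List (Option A)
  | [] => []
  | Sum.inl a :: rest => a :: applySub h rest
  | Sum.inr x :: rest => h x ++ applySub h rest

/-- Embed a constant word over Σ into patterns over Σ ∪ {#}. -/
def lift {A : Type} (u : List A) : List (Option A ⊕ ℕ) := u.map (fun a => Sum.inl (some a))

/-- Embed a constant word over Σ into words over Σ ∪ {#}. -/
def liftW {A : Type} (u : List A) : List (Option A) := u.map some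

/-- The fresh letter `#` as a pattern symbol. -/
def hash {A : Type} : Option A ⊕ ℕ := Sum.inl none

/-- `x_1 w_1 x_2 w_2 ⋯ x_n w_n`. -/
def blocks {A : Type} (w : ℕ → List A) : ℕ → List (Option A ⊕ ℕ)
  | 0 => []
  | n + 1 => blocks w n ++ (Sum.inr (n + 1) :: lift (w (n + 1)))

/-- α_μ = `x_1 w_1 x_2 w_2 ⋯ x_n w_n x_{n+1} # u_end`. -/
def alphaMu {A : Type} (n : ℕ) (uend : List A) (w : ℕ → List A) : List (Option A ⊕ ℕ) :=
  blocks w n ++ [Sum.inr (n + 1), hash] ++ lift uend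

/-- β_μ = `# u_start x_1 w'_1 x_2 w'_2 ⋯ x_n w'_n x_{n+1}`. -/
def betaMu {A : Type} (n : ℕ) (ustart : List A) (w' : ℕ → List A) : List (Option A ⊕ ℕ) :=
  hash :: lift ustart ++ blocks w' n ++ [Sum.inr (n + 1)]

/-- `x_1 w_1 ⋯ x_i w_i`. -/
def alphaPrefix {A : Type} (w : ℕ → List A) (i : ℕ) : List (Option A ⊕ ℕ) := blocks w i

/-- `# u_start x_1 w'_1 ⋯ w'_{i-1} x_i`. -/
def betaPrefix {A : Type} (ustart : List A) (w' : ℕ → List A) (i : ℕ) :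
    List (Option A ⊕ ℕ) :=
  hash :: lift ustart ++ blocks w' (i - 1) ++ [Sum.inr i]

/-- `h` is a solution of the equation α = β. -/
def IsSolution {A : Type} (h : ℕ → List (Option A)) (α β : List (Option A ⊕ ℕ)) : Prop :=
  applySub h α = applySub h β

/-- `h` is an overlapping solution of α_μ = β_μ : it is a solution and, for every
`1 ≤ i ≤ n`, there is `z_i` such that `w_i z_i` is a suffix of `h(x_i)` and
`h(# u_start x_1 w'_1 ⋯ w'_{i-1} x_i) = h(x_1 w_1 ⋯ x_i w_i) z_i`. -/
def OverlappingSolution {A : Type} (n : ℕ) (ustart uend : List A) (w w' : ℕ → List A)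
    (h : ℕ → List (Option A)) : Prop :=
  IsSolution h (alphaMu n uend w) (betaMu n ustart w') ∧
  ∀ i, 1 ≤ i → i ≤ n → ∃ z : List (Option A),
    (liftW (w i) ++ z) <:+ h i ∧
    applySub h (betaPrefix ustart w' i) = applySub h (alphaPrefix w i) ++ z

/-- `n`-fold concatenation `u^n` of the word `u`. -/
def npow {A : Type} (u : List A) : ℕ → List A
  | 0 => []
  | n + 1 => u ++ npow u n

/-- `y_i`, the suffix of `h(x_i)` of length `|v_i| - |w_i|`. -/
def ySuf {A : Type} (h : ℕ → List (Option A)) (v : ℕ → List (Option A)) (w : ℕ → List A)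
    (i : ℕ) : List (Option A) :=
  (h i).drop ((h i).length - ((v i).length - (w i).length))

/-- Two words are conjugate if `u = st` and `v = ts` for some words `s`, `t`. -/
def Conj {B : Type} (u v : List B) : Prop := ∃ s t : List B, u = s ++ t ∧ v = t ++ s

/-- The words `v_1, …, v_n` associated with an overlapping solution `h`
(as guaranteed by the characterisation of overlapping solutions):
`v_i` is a prefix of `h(x_i)`, `|w_i| ≤ |v_i|`, `h(x_i) w_i` is a prefix of `v_i^ω`
(i.e. of `v_i^m` for all sufficiently large `m`), `v_1 = # u_start`,
`v_i = y_{i-1} w'_{i-1}` for `2 ≤ i ≤ n`, and `y_n w'_n h(x_{n+1}) = h(x_{n+1}) # u_end`. -/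
def AssocWords {A : Type} (n : ℕ) (ustart uend : List A) (w w' : ℕ → List A)
    (h : ℕ → List (Option A)) (v : ℕ → List (Option A)) : Prop :=
  (∀ i, 1 ≤ i → i ≤ n →
    v i <+: h i ∧ (w i).length ≤ (v i).length ∧
    ∃ N : ℕ, ∀ m : ℕ, N ≤ m → (h i ++ liftW (w i)) <+: npow (v i) m) ∧
  v 1 = none :: liftW ustart ∧
  (∀ i, 2 ≤ i → i ≤ n → v i = ySuf h v w (i - 1) ++ liftW (w' (i - 1))) ∧
  ySuf h v w n ++ liftW (w' n) ++ h (n + 1) = h (n + 1) ++ none :: liftW uend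

end REP

/-!
STATEMENT 2: there is a regular-ordered equation α = β (built with variables
x_1, …, x_{3n+3}) which is satisfiable iff α_μ = β_μ has an overlapping solution.
-/

namespace REP

/-- `(x_1 # x_2 # x_3 w_1)(x_4 # x_5 # x_6 w_2) ⋯ (x_{3n-2} # x_{3n-1} # x_{3n} w_n)`. -/
def blocks3 {A : Type} (w : ℕ → List A) : ℕ → List (Option A ⊕ ℕ)
  | 0 => []
  | n + 1 => blocks3 w n ++
      ([Sum.inr (3 * n + 1), hash, Sum.inr (3 * n + 2), hash, Sum.inr (3 * n + 3)] ++
        lift (w (n + 1)))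

/-- α := `x_1 # x_2 # x_3 w_1 ⋯ x_{3n+1} # x_{3n+2} # x_{3n+3} # u_end`. -/
def alphaEq {A : Type} (n : ℕ) (uend : List A) (w : ℕ → List A) : List (Option A ⊕ ℕ) :=
  blocks3 w n ++
    [Sum.inr (3 * n + 1), hash, Sum.inr (3 * n + 2), hash, Sum.inr (3 * n + 3), hash] ++
    lift uend

/-- β := `# u_start x_1 # x_2 # x_3 w'_1 ⋯ w'_n x_{3n+1} # x_{3n+2} # x_{3n+3}`. -/
def betaEq {A : Type} (n : ℕ) (ustart : List A) (w' : ℕ → List A) : List (Option A ⊕ ℕ) :=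
  hash :: lift ustart ++ blocks3 w' n ++
    [Sum.inr (3 * n + 1), hash, Sum.inr (3 * n + 2), hash, Sum.inr (3 * n + 3)]

end REP


namespace REPAux
open REP

variable {A : Type}

/-- number of `#` (i.e. `none`) in a word -/
def cnt (u : List (Option A)) : ℕ := u.countP (fun x => x.isNone)

@[simp] lemma cnt_nil : cnt ([] : List (Option A)) = 0 := rfl

@[simp] lemma cnt_append (u v : List (Option A)) : cnt (u ++ v) = cnt u + cnt v :=
  List.countP_append

@[simp] lemma cnt_cons_none (u : List (Option A)) : cnt (none :: u) = cnt u + 1 := by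
  simp [cnt, List.countP_cons]

@[simp] lemma cnt_liftW (u : List A) : cnt (liftW u) = 0 := by
  induction u with
  | nil => rfl
  | cons a t ih => simp [liftW, cnt, List.countP_cons, ih]

@[simp] lemma applySub_nil (h : ℕ → List (Option A)) : applySub h [] = [] := rfl

@[simp] lemma applySub_inl (h : ℕ → List (Option A)) (a : Option A) (p) :
    applySub h (Sum.inl a :: p) = a :: applySub h p := rfl

@[simp] lemma applySub_inr (h : ℕ → List (Option A)) (x : ℕ) (p) :
    applySub h (Sum.inr x :: p) = h x ++ applySub h p := rfl

@[simp] lemma applySub_append (h : ℕ → List (Option A)) (p q : List (Option A ⊕ ℕ)) :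
    applySub h (p ++ q) = applySub h p ++ applySub h q := by
  induction p with
  | nil => rfl
  | cons a t ih => cases a <;> simp [ih]

@[simp] lemma applySub_lift (h : ℕ → List (Option A)) (u : List A) :
    applySub h (lift u) = liftW u := by
  induction u with
  | nil => rfl
  | cons a t ih => simp [lift, liftW] at ih ⊢; exact ih

lemma applySub_congr {f g : ℕ → List (Option A)} {p : List (Option A ⊕ ℕ)}
    (hfg : ∀ x, Sum.inr x ∈ p → f x = g x) : applySub f p = applySub g p := by
  induction p with
  | nil => rfl
  | cons a t ih =>
    cases a with
    | inl a => simp [ih fun x hx => hfg x (by simp [hx])]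
    | inr x => simp [hfg x (by simp), ih fun x hx => hfg x (by simp [hx])]

lemma blocks_succ (w : ℕ → List A) (k : ℕ) :
    blocks w (k + 1) = blocks w k ++ Sum.inr (k + 1) :: lift (w (k + 1)) := rfl

lemma mem_blocks_vars {w : ℕ → List A} {k x : ℕ} (hx : Sum.inr x ∈ blocks w k) :
    1 ≤ x ∧ x ≤ k := by
  induction k with
  | zero => simp [blocks] at hx
  | succ m ih =>
    rw [blocks_succ] at hx
    rcases List.mem_append.1 hx with h | h
    · exact ⟨(ih h).1, le_trans (ih h).2 (Nat.le_succ m)⟩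
    · rcases List.mem_cons.1 h with h | h
      · simp at h; omega
      · simp [lift] at h

lemma blocks_split {w : ℕ → List A} {i m : ℕ} (him : i ≤ m) :
    ∃ t, blocks w m = blocks w i ++ t ∧ ∀ x, Sum.inr x ∈ t → i < x ∧ x ≤ m := by
  induction m with
  | zero => exact ⟨[], by simpa using (Nat.le_zero.1 him ▸ rfl), by simp⟩
  | succ m ih =>
    rcases Nat.lt_or_ge i (m + 1) with hlt | hge
    · obtain ⟨t, ht, hvar⟩ := ih (by omega)
      refine ⟨t ++ Sum.inr (m + 1) :: lift (w (m + 1)), by simp [blocks_succ, ht], ?_⟩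
      intro x hx
      rcases List.mem_append.1 hx with h | h
      · exact ⟨(hvar x h).1, by have := (hvar x h).2; omega⟩
      · rcases List.mem_cons.1 h with h | h
        · simp at h; omega
        · simp [lift] at h
    · have : i = m + 1 := by omega
      exact ⟨[], by simp [this], by simp⟩

lemma cnt_applySub_blocks (f : ℕ → List (Option A)) (w : ℕ → List A) (k : ℕ) :
    cnt (applySub f (blocks w k)) = ∑ j ∈ Finset.range k, cnt (f (j + 1)) := by
  induction k with
  | zero => simp [blocks]
  | succ m ih => simp [blocks_succ, ih, Finset.sum_range_succ]

lemma applySub_blocks_prefix (f : ℕ → List (Option A)) (w : ℕ → List A) {k m : ℕ}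
    (hkm : k ≤ m) : applySub f (blocks w k) <+: applySub f (blocks w m) := by
  obtain ⟨t, ht, -⟩ := blocks_split (w := w) hkm
  exact ⟨applySub f t, by simp [ht]⟩

lemma length_lt_of_cnt_lt {P1 P2 S : List (Option A)} (h1 : P1 <+: S) (h2 : P2 <+: S)
    (hc : cnt P1 < cnt P2) : P1.length < P2.length := by
  by_contra hle
  have h21 : P2 <+: P1 := List.prefix_of_prefix_length_le h2 h1 (by omega)
  have hle2 := h21.sublist.countP_le (p := fun x => x.isNone)
  simp only [cnt] at hc
  omega

end REPAux
namespace REPAux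
open REP
variable {A : Type}

@[simp] lemma hash_eq : (hash : Option A ⊕ ℕ) = Sum.inl none := rfl

lemma applySub_alphaMu (f : ℕ → List (Option A)) (n : ℕ) (uend : List A) (w : ℕ → List A) :
    applySub f (alphaMu n uend w) =
      applySub f (blocks w n) ++ (f (n + 1) ++ none :: liftW uend) := by
  simp [alphaMu]

lemma applySub_betaMu (f : ℕ → List (Option A)) (n : ℕ) (ustart : List A) (w' : ℕ → List A) :
    applySub f (betaMu n ustart w') =
      none :: (liftW ustart ++ (applySub f (blocks w' n) ++ f (n + 1))) := by
  simp [betaMu]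

lemma applySub_betaPrefix (f : ℕ → List (Option A)) (ustart : List A) (w' : ℕ → List A)
    (i : ℕ) :
    applySub f (betaPrefix ustart w' i) =
      none :: (liftW ustart ++ (applySub f (blocks w' (i - 1)) ++ f i)) := by
  simp [betaPrefix]

lemma overlapping_of_two_hashes {n : ℕ} {ustart uend : List A} {w w' : ℕ → List A}
    {f : ℕ → List (Option A)}
    (hsol : IsSolution f (alphaMu n uend w) (betaMu n ustart w'))
    (h2 : ∀ j, 1 ≤ j → j ≤ n → 2 ≤ cnt (f j)) :
    OverlappingSolution n ustart uend w w' f := by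
  refine ⟨hsol, ?_⟩
  intro i hi1 hin
  have hSβ : applySub f (alphaMu n uend w) = applySub f (betaMu n ustart w') := hsol
  have hib : i = (i - 1) + 1 := by omega
  have hAi := blocks_succ w (i - 1)
  rw [← hib] at hAi
  have hBi := blocks_succ w' (i - 1)
  rw [← hib] at hBi
  obtain ⟨tβ, htβ, -⟩ := blocks_split (w := w') (i := i) (m := n) hin
  set S := applySub f (alphaMu n uend w) with hS
  set A' := applySub f (blocks w (i - 1)) with hA'
  set B' := applySub f (blocks w' (i - 1)) with hB'
  set Pa := applySub f (blocks w i) with hPadef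
  set Qa := A' ++ f i with hQa
  set Qb := (none :: (liftW ustart ++ B') : List (Option A)) with hQb
  set Pb := applySub f (betaPrefix ustart w' i) with hPbdef
  have hPaQ : Pa = Qa ++ liftW (w i) := by
    rw [hPadef, hAi]; simp [hQa, hA']
  have hPbQ : Pb = Qb ++ f i := by
    rw [hPbdef, applySub_betaPrefix]; simp [hQb, hB']
  have hPaS : Pa <+: S := by
    refine (applySub_blocks_prefix f w hin).trans ⟨f (n + 1) ++ none :: liftW uend, ?_⟩
    rw [hS, applySub_alphaMu]
  have hQaPa : Qa <+: Pa := ⟨liftW (w i), by rw [hPaQ]⟩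
  have hQaS : Qa <+: S := hQaPa.trans hPaS
  have hPbS : Pb <+: S := by
    refine ⟨liftW (w' i) ++ (applySub f tβ ++ f (n + 1)), ?_⟩
    rw [hS, show applySub f (alphaMu n uend w) = applySub f (betaMu n ustart w') from hsol,
      applySub_betaMu, htβ, hBi, hPbQ]
    simp [hQb, hB']
  have hQbPb : Qb <+: Pb := ⟨f i, hPbQ.symm⟩
  have hQbS : Qb <+: S := hQbPb.trans hPbS
  have cT : (∑ j ∈ Finset.range i, cnt (f (j + 1)))
      = (∑ j ∈ Finset.range (i - 1), cnt (f (j + 1))) + cnt (f i) := by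
    conv_lhs => rw [hib, Finset.sum_range_succ, ← hib]
  have cPa : cnt Pa = (∑ j ∈ Finset.range (i - 1), cnt (f (j + 1))) + cnt (f i) := by
    rw [hPadef, cnt_applySub_blocks, cT]
  have cQa : cnt Qa = (∑ j ∈ Finset.range (i - 1), cnt (f (j + 1))) + cnt (f i) := by
    rw [hQa]; simp [hA', cnt_applySub_blocks]
  have cQb : cnt Qb = (∑ j ∈ Finset.range (i - 1), cnt (f (j + 1))) + 1 := by
    rw [hQb]; simp [hB', cnt_applySub_blocks]
  have cPb : cnt Pb = (∑ j ∈ Finset.range (i - 1), cnt (f (j + 1))) + cnt (f i) + 1 := by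
    rw [hPbQ]; simp [cQb]; omega
  have hfi2 : 2 ≤ cnt (f i) := h2 i hi1 hin
  have len1 : Qb.length < Qa.length :=
    length_lt_of_cnt_lt hQbS hQaS (by omega)
  have len2 : Pa.length < Pb.length :=
    length_lt_of_cnt_lt hPaS hPbS (by omega)
  have hPaPb : Pa <+: Pb := List.prefix_of_prefix_length_le hPaS hPbS (le_of_lt len2)
  have hz : Pa ++ Pb.drop Pa.length = Pb := List.prefix_iff_eq_append.1 hPaPb
  refine ⟨Pb.drop Pa.length, ?_, ?_⟩
  · have s2 : f i <:+ Pb := ⟨Qb, hPbQ.symm⟩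
    have s1 : liftW (w i) ++ Pb.drop Pa.length <:+ Pb :=
      ⟨Qa, by rw [← List.append_assoc, ← hPaQ, hz]⟩
    have l1 : Pb.length = Pa.length + (Pb.drop Pa.length).length := by
      rw [← hz]; simp
    have l2 : Pa.length = Qa.length + (liftW (w i)).length := by rw [hPaQ]; simp
    have l3 : Pb.length = Qb.length + (f i).length := by rw [hPbQ]; simp
    refine List.suffix_of_suffix_length_le s1 s2 ?_
    simp only [List.length_append]
    omega
  · show Pb = applySub f (alphaPrefix w i) ++ Pb.drop Pa.length
    rw [show applySub f (alphaPrefix w i) = Pa from rfl, hz]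

end REPAux
namespace REPAux
open REP
variable {A : Type}

/-- the triple-variable condition -/
def Trip (f g : ℕ → List (Option A)) (j : ℕ) : Prop :=
  f j = g (3 * j - 2) ++ none :: (g (3 * j - 1) ++ none :: g (3 * j))

lemma blocks3_corr {f g : ℕ → List (Option A)} (w : ℕ → List A) (k : ℕ)
    (hfg : ∀ j, 1 ≤ j → j ≤ k → Trip f g j) :
    applySub g (blocks3 w k) = applySub f (blocks w k) := by
  induction k with
  | zero => rfl
  | succ m ih =>
    have e1 : 3 * (m + 1) - 2 = 3 * m + 1 := by omega
    have e2 : 3 * (m + 1) - 1 = 3 * m + 2 := by omega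
    have e3 : 3 * (m + 1) = 3 * m + 3 := by omega
    have ht := hfg (m + 1) (by omega) (le_refl _)
    rw [Trip, e1, e2, e3] at ht
    show applySub g (blocks3 w m ++ _) = applySub f (blocks w m ++ _)
    rw [applySub_append, applySub_append,
      ih (fun j h1 h2 => hfg j h1 (by omega))]
    simp [ht]

lemma alphaEq_corr {f g : ℕ → List (Option A)} (n : ℕ) (uend : List A) (w : ℕ → List A)
    (hfg : ∀ j, 1 ≤ j → j ≤ n + 1 → Trip f g j) :
    applySub g (alphaEq n uend w) = applySub f (alphaMu n uend w) := by
  have e1 : 3 * (n + 1) - 2 = 3 * n + 1 := by omega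
  have e2 : 3 * (n + 1) - 1 = 3 * n + 2 := by omega
  have e3 : 3 * (n + 1) = 3 * n + 3 := by omega
  have ht := hfg (n + 1) (by omega) (le_refl _)
  rw [Trip, e1, e2, e3] at ht
  rw [alphaEq, applySub_alphaMu, applySub_append, applySub_append,
    blocks3_corr w n (fun j h1 h2 => hfg j h1 (by omega))]
  simp [ht]

lemma betaEq_corr {f g : ℕ → List (Option A)} (n : ℕ) (ustart : List A) (w' : ℕ → List A)
    (hfg : ∀ j, 1 ≤ j → j ≤ n + 1 → Trip f g j) :
    applySub g (betaEq n ustart w') = applySub f (betaMu n ustart w') := by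
  have e1 : 3 * (n + 1) - 2 = 3 * n + 1 := by omega
  have e2 : 3 * (n + 1) - 1 = 3 * n + 2 := by omega
  have e3 : 3 * (n + 1) = 3 * n + 3 := by omega
  have ht := hfg (n + 1) (by omega) (le_refl _)
  rw [Trip, e1, e2, e3] at ht
  rw [betaEq, applySub_betaMu]
  show none :: applySub g (lift ustart ++ blocks3 w' n ++ _) = _
  rw [applySub_append, applySub_append,
    blocks3_corr w' n (fun j h1 h2 => hfg j h1 (by omega))]
  simp [ht]

end REPAux
namespace REPAux
open REP
variable {A : Type}

lemma insert_eq {B : Type} {A0 Nb Hi D W W' Ra Rb : List B}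
    (E : A0 ++ (Hi ++ (W ++ Ra)) = Nb ++ (Hi ++ (W' ++ Rb)))
    (hstar : Nb ++ Hi = A0 ++ (Hi ++ D)) :
    A0 ++ ((Hi ++ D) ++ (W ++ Ra)) = Nb ++ ((Hi ++ D) ++ (W' ++ Rb)) := by
  have key : W ++ Ra = D ++ (W' ++ Rb) := by
    apply List.append_cancel_left (as := A0 ++ Hi)
    calc A0 ++ Hi ++ (W ++ Ra) = A0 ++ (Hi ++ (W ++ Ra)) := by simp
    _ = Nb ++ (Hi ++ (W' ++ Rb)) := E
    _ = (Nb ++ Hi) ++ (W' ++ Rb) := by simp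
    _ = (A0 ++ (Hi ++ D)) ++ (W' ++ Rb) := by rw [hstar]
    _ = A0 ++ Hi ++ (D ++ (W' ++ Rb)) := by simp
  calc A0 ++ ((Hi ++ D) ++ (W ++ Ra)) = (A0 ++ (Hi ++ D)) ++ (W ++ Ra) := by simp
  _ = (Nb ++ Hi) ++ (W ++ Ra) := by rw [hstar]
  _ = (Nb ++ Hi) ++ (D ++ (W' ++ Rb)) := by rw [key]
  _ = Nb ++ ((Hi ++ D) ++ (W' ++ Rb)) := by simp

lemma mem_betaPrefix_vars {ustart : List A} {w' : ℕ → List A} {j x : ℕ}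
    (hx : Sum.inr x ∈ betaPrefix ustart w' j) : x ≤ j := by
  rw [betaPrefix] at hx
  rcases List.mem_cons.1 hx with hx | hx
  · simp at hx
  · rcases List.mem_append.1 hx with hx | hx
    · rcases List.mem_append.1 hx with hx | hx
      · simp [lift] at hx
      · exact le_trans (mem_blocks_vars hx).2 (by omega)
    · simp at hx; omega

lemma applySub_update_blocks_lt (h : ℕ → List (Option A)) (i : ℕ) (v : List (Option A))
    (w : ℕ → List A) (k : ℕ) (hk : k < i) :
    applySub (Function.update h i v) (blocks w k) = applySub h (blocks w k) :=
  applySub_congr fun x hx =>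
    Function.update_of_ne (by have := mem_blocks_vars hx; omega) _ _

lemma applySub_update_of_gt (h : ℕ → List (Option A)) (i : ℕ) (v : List (Option A))
    {t : List (Option A ⊕ ℕ)} (ht : ∀ x, Sum.inr x ∈ t → i < x) :
    applySub (Function.update h i v) t = applySub h t :=
  applySub_congr fun x hx =>
    Function.update_of_ne (by have := ht x hx; omega) _ _

lemma applySub_update_blocks_ge (h : ℕ → List (Option A)) (v : List (Option A))
    {w : ℕ → List A} {i j : ℕ} (hi1 : 1 ≤ i)
    {tj : List (Option A ⊕ ℕ)} (htj : blocks w j = blocks w i ++ tj)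
    (hvj : ∀ x, Sum.inr x ∈ tj → i < x) :
    applySub (Function.update h i v) (blocks w j)
      = applySub h (blocks w (i - 1)) ++ (v ++ (liftW (w i) ++ applySub h tj)) := by
  have hib : i = (i - 1) + 1 := by omega
  have hAi := blocks_succ w (i - 1); rw [← hib] at hAi
  rw [htj, hAi, applySub_append, applySub_append, applySub_inr,
    applySub_update_blocks_lt h i v w (i - 1) (by omega),
    applySub_update_of_gt h i v hvj, Function.update_self]
  simp

end REPAux
namespace REPAux
open REP
variable {A : Type}

lemma pump {n : ℕ} {ustart uend : List A} {w w' : ℕ → List A} {h : ℕ → List (Option A)}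
    (hov : OverlappingSolution n ustart uend w w' h) (i : ℕ) (hi1 : 1 ≤ i)
    (hin : i ≤ n + 1) :
    ∃ h' : ℕ → List (Option A), OverlappingSolution n ustart uend w w' h' ∧
      (∀ j, j ≠ i → h' j = h j) ∧ cnt (h i) + 1 ≤ cnt (h' i) := by
  rcases Nat.lt_or_ge i (n + 1) with hilt | hige
  · -- pump in the middle, 1 ≤ i ≤ n
    have hin' : i ≤ n := by omega
    obtain ⟨z, hzsuf, hzeq⟩ := hov.2 i hi1 hin'
    have hib : i = (i - 1) + 1 := by omega
    have hAi := blocks_succ w (i - 1); rw [← hib] at hAi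
    have hBi := blocks_succ w' (i - 1); rw [← hib] at hBi
    -- the key overlapping identity, in `insert_eq` star-shape
    have hstar : (none :: (liftW ustart ++ applySub h (blocks w' (i - 1)))) ++ h i
        = applySub h (blocks w (i - 1)) ++ (h i ++ (liftW (w i) ++ z)) := by
      have hz := hzeq
      rw [applySub_betaPrefix,
        show applySub h (alphaPrefix w i) = applySub h (blocks w i) from rfl, hAi] at hz
      simpa using hz
    -- hash count of z is 1
    have hcz : 1 ≤ cnt z := by
      have hc := congrArg cnt hzeq
      rw [applySub_betaPrefix,
        show applySub h (alphaPrefix w i) = applySub h (blocks w i) from rfl] at hc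
      have cT : ∑ j ∈ Finset.range i, cnt (h (j + 1))
          = (∑ j ∈ Finset.range (i - 1), cnt (h (j + 1))) + cnt (h i) := by
        conv_lhs => rw [hib, Finset.sum_range_succ, ← hib]
      simp [cnt_applySub_blocks] at hc
      omega
    refine ⟨Function.update h i (h i ++ (liftW (w i) ++ z)), ⟨?_, ?_⟩, ?_, ?_⟩
    · -- IsSolution
      obtain ⟨tα, htα, hvα⟩ := blocks_split (w := w) (i := i) (m := n) hin'
      obtain ⟨tβ, htβ, hvβ⟩ := blocks_split (w := w') (i := i) (m := n) hin'
      have Eold : applySub h (blocks w (i - 1)) ++ (h i ++ (liftW (w i)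
            ++ (applySub h tα ++ (h (n + 1) ++ none :: liftW uend))))
          = (none :: (liftW ustart ++ applySub h (blocks w' (i - 1)))) ++ (h i
            ++ (liftW (w' i) ++ (applySub h tβ ++ h (n + 1)))) := by
        have hE := hov.1
        rw [IsSolution, applySub_alphaMu, applySub_betaMu, htα, hAi, htβ, hBi] at hE
        simpa using hE
      show applySub _ (alphaMu n uend w) = applySub _ (betaMu n ustart w')
      rw [applySub_alphaMu, applySub_betaMu,
        applySub_update_blocks_ge h _ hi1 htα (fun x hx => (hvα x hx).1),
        applySub_update_blocks_ge h _ hi1 htβ (fun x hx => (hvβ x hx).1),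
        Function.update_of_ne (show n + 1 ≠ i by omega)]
      simpa using insert_eq Eold hstar
    · -- overlapping conditions
      intro j hj1 hjn
      rcases Nat.lt_trichotomy j i with hji | hji | hji
      · obtain ⟨zj, hzjsuf, hzjeq⟩ := hov.2 j hj1 hjn
        refine ⟨zj, ?_, ?_⟩
        · rw [Function.update_of_ne (by omega)]; exact hzjsuf
        · have ha : applySub (Function.update h i (h i ++ (liftW (w i) ++ z)))
              (alphaPrefix w j) = applySub h (alphaPrefix w j) :=
            applySub_congr fun x hx =>
              Function.update_of_ne (by have := mem_blocks_vars hx; omega) _ _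
          have hb : applySub (Function.update h i (h i ++ (liftW (w i) ++ z)))
              (betaPrefix ustart w' j) = applySub h (betaPrefix ustart w' j) :=
            applySub_congr fun x hx =>
              Function.update_of_ne (by have := mem_betaPrefix_vars hx; omega) _ _
          rw [ha, hb]; exact hzjeq
      · subst hji
        refine ⟨z, ?_, ?_⟩
        · rw [Function.update_self]
          exact (List.suffix_append _ _)
        · rw [applySub_betaPrefix,
            show applySub (Function.update h j (h j ++ (liftW (w j) ++ z)))
                (alphaPrefix w j)
              = applySub (Function.update h j (h j ++ (liftW (w j) ++ z)))
                (blocks w j) from rfl,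
            applySub_update_blocks_ge (w := w) (j := j) h _ hj1 (tj := []) (by simp) (by simp),
            applySub_update_blocks_lt h j _ w' (j - 1) (by omega),
            Function.update_self]
          have h2 := congrArg (· ++ (liftW (w j) ++ z)) hstar
          simpa using h2
      · obtain ⟨zj, hzjsuf, hzjeq⟩ := hov.2 j hj1 hjn
        obtain ⟨tαj, htαj, hvαj⟩ := blocks_split (w := w) (i := i) (m := j) (by omega)
        obtain ⟨tβj, htβj, hvβj⟩ := blocks_split (w := w') (i := i) (m := j - 1) (by omega)
        have Ej : applySub h (blocks w (i - 1)) ++ (h i ++ (liftW (w i)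
              ++ (applySub h tαj ++ zj)))
            = (none :: (liftW ustart ++ applySub h (blocks w' (i - 1)))) ++ (h i
              ++ (liftW (w' i) ++ (applySub h tβj ++ h j))) := by
          have hE := hzjeq
          rw [applySub_betaPrefix,
            show applySub h (alphaPrefix w j) = applySub h (blocks w j) from rfl,
            htαj, hAi, htβj, hBi] at hE
          simpa using hE.symm
        refine ⟨zj, ?_, ?_⟩
        · rw [Function.update_of_ne (by omega)]; exact hzjsuf
        · rw [applySub_betaPrefix,
            show applySub (Function.update h i (h i ++ (liftW (w i) ++ z)))
                (alphaPrefix w j)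
              = applySub (Function.update h i (h i ++ (liftW (w i) ++ z)))
                (blocks w j) from rfl,
            applySub_update_blocks_ge h _ hi1 htαj (fun x hx => (hvαj x hx).1),
            applySub_update_blocks_ge h _ hi1 htβj (fun x hx => (hvβj x hx).1),
            Function.update_of_ne (show j ≠ i by omega)]
          simpa using (insert_eq Ej hstar).symm
    · intro j hj; exact Function.update_of_ne hj _ _
    · rw [Function.update_self]; simp; omega
  · -- pump the last variable, i = n + 1
    have hieq : i = n + 1 := by omega
    subst hieq
    refine ⟨Function.update h (n + 1) (h (n + 1) ++ (none :: liftW uend)), ⟨?_, ?_⟩, ?_, ?_⟩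
    · have hE := hov.1
      rw [IsSolution, applySub_alphaMu, applySub_betaMu] at hE
      show applySub _ (alphaMu n uend w) = applySub _ (betaMu n ustart w')
      rw [applySub_alphaMu, applySub_betaMu,
        applySub_update_blocks_lt h (n + 1) _ w n (by omega),
        applySub_update_blocks_lt h (n + 1) _ w' n (by omega),
        Function.update_self]
      have h2 := congrArg (· ++ (none :: liftW uend)) hE
      simpa using h2
    · intro j hj1 hjn
      obtain ⟨zj, hzjsuf, hzjeq⟩ := hov.2 j hj1 hjn
      refine ⟨zj, ?_, ?_⟩
      · rw [Function.update_of_ne (by omega)]; exact hzjsuf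
      · have ha : applySub (Function.update h (n + 1) (h (n + 1) ++ (none :: liftW uend)))
            (alphaPrefix w j) = applySub h (alphaPrefix w j) :=
          applySub_congr fun x hx =>
            Function.update_of_ne (by have := mem_blocks_vars hx; omega) _ _
        have hb : applySub (Function.update h (n + 1) (h (n + 1) ++ (none :: liftW uend)))
            (betaPrefix ustart w' j) = applySub h (betaPrefix ustart w' j) :=
          applySub_congr fun x hx =>
            Function.update_of_ne (by have := mem_betaPrefix_vars hx; omega) _ _
        rw [ha, hb]; exact hzjeq
    · intro j hj; exact Function.update_of_ne hj _ _
    · rw [Function.update_self]; simp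

end REPAux
namespace REPAux
open REP
variable {A : Type}

@[simp] lemma cnt_cons_some (a : A) (u : List (Option A)) : cnt (some a :: u) = cnt u := by
  simp [cnt, List.countP_cons]

lemma exists_two_hashes {n : ℕ} {ustart uend : List A} {w w' : ℕ → List A}
    {h : ℕ → List (Option A)} (hov : OverlappingSolution n ustart uend w w' h) :
    ∃ h', OverlappingSolution n ustart uend w w' h' ∧
      ∀ j, 1 ≤ j → j ≤ n + 1 → 2 ≤ cnt (h' j) := by
  have main : ∀ k, ∃ h', OverlappingSolution n ustart uend w w' h' ∧
      ∀ j, 1 ≤ j → j ≤ n + 1 → j ≤ k → 2 ≤ cnt (h' j) := by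
    intro k
    induction k with
    | zero => exact ⟨h, hov, fun j a b c => by omega⟩
    | succ m ih =>
      obtain ⟨h1, hov1, hc1⟩ := ih
      rcases Nat.lt_or_ge (n + 1) (m + 1) with hk | hk
      · exact ⟨h1, hov1, fun j a b c => hc1 j a b (by omega)⟩
      · obtain ⟨h2, hov2, hag2, hc2⟩ := pump hov1 (m + 1) (by omega) hk
        obtain ⟨h3, hov3, hag3, hc3⟩ := pump hov2 (m + 1) (by omega) hk
        refine ⟨h3, hov3, fun j hj1 hjn hjm => ?_⟩
        rcases Nat.lt_or_ge j (m + 1) with hj | hj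
        · rw [hag3 j (by omega), hag2 j (by omega)]
          exact hc1 j hj1 hjn (by omega)
        · have hjeq : j = m + 1 := by omega
          subst hjeq
          omega
  obtain ⟨h', a, b⟩ := main (n + 1)
  exact ⟨h', a, fun j hj1 hjn => b j hj1 hjn hjn⟩

lemma exists_split {u : List (Option A)} (hu : 2 ≤ cnt u) :
    ∃ a b c : List (Option A), u = a ++ none :: (b ++ none :: c) := by
  induction u with
  | nil => simp at hu
  | cons x t ih =>
    cases x with
    | none =>
      have h1 : 1 ≤ cnt t := by simp at hu; omega
      have hmem : (none : Option A) ∈ t := by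
        by_contra hm
        have h0 : cnt t = 0 := List.countP_eq_zero.2 (fun x hx => by
          cases x with
          | none => exact absurd hx hm
          | some a => simp)
        omega
      obtain ⟨b, c, rfl⟩ := List.append_of_mem hmem
      exact ⟨[], b, c, rfl⟩
    | some a0 =>
      have h2 : 2 ≤ cnt t := by simpa using hu
      obtain ⟨a, b, c, rfl⟩ := ih h2
      exact ⟨some a0 :: a, b, c, rfl⟩

lemma converse {n : ℕ} {ustart uend : List A} {w w' : ℕ → List A} {h : ℕ → List (Option A)}
    (hov : OverlappingSolution n ustart uend w w' h) :
    ∃ g, IsSolution g (alphaEq n uend w) (betaEq n ustart w') := by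
  obtain ⟨h', hov', hc⟩ := exists_two_hashes hov
  have hdec : ∀ i, ∃ abc : List (Option A) × List (Option A) × List (Option A),
      (1 ≤ i → i ≤ n + 1 → h' i = abc.1 ++ none :: (abc.2.1 ++ none :: abc.2.2)) := by
    intro i
    by_cases hi : 1 ≤ i ∧ i ≤ n + 1
    · obtain ⟨a, b, c, habc⟩ := exists_split (hc i hi.1 hi.2)
      exact ⟨(a, b, c), fun _ _ => habc⟩
    · exact ⟨([], [], []), fun h1 h2 => absurd ⟨h1, h2⟩ hi⟩
  choose abc habc using hdec
  set g : ℕ → List (Option A) := fun m =>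
    if m % 3 = 1 then (abc ((m + 2) / 3)).1
    else if m % 3 = 2 then (abc ((m + 1) / 3)).2.1
    else (abc (m / 3)).2.2 with hg
  have htrip : ∀ j, 1 ≤ j → j ≤ n + 1 → Trip h' g j := by
    intro j hj1 hjn
    have g1 : g (3 * j - 2) = (abc j).1 := by
      simp only [hg]
      rw [if_pos (by omega), show (3 * j - 2 + 2) / 3 = j by omega]
    have g2 : g (3 * j - 1) = (abc j).2.1 := by
      simp only [hg]
      rw [if_neg (by omega), if_pos (by omega), show (3 * j - 1 + 1) / 3 = j by omega]
    have g3 : g (3 * j) = (abc j).2.2 := by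
      simp only [hg]
      rw [if_neg (by omega), if_neg (by omega), show 3 * j / 3 = j by omega]
    rw [Trip, g1, g2, g3]
    exact habc j hj1 hjn
  refine ⟨g, ?_⟩
  rw [IsSolution, alphaEq_corr n uend w htrip, betaEq_corr n ustart w' htrip]
  exact hov'.1

end REPAux

open REP in
theorem stmt2 (A : Type) (n : ℕ) (ustart uend : List A) (w w' : ℕ → List A) :
    (∃ g : ℕ → List (Option A), IsSolution g (alphaEq n uend w) (betaEq n ustart w')) ↔
    (∃ h : ℕ → List (Option A), OverlappingSolution n ustart uend w w' h) := by
  constructor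
  · rintro ⟨g, hg⟩
    refine ⟨fun j => g (3 * j - 2) ++ none :: (g (3 * j - 1) ++ none :: g (3 * j)), ?_⟩
    have htrip : ∀ j, 1 ≤ j → j ≤ n + 1 →
        REPAux.Trip (fun j => g (3 * j - 2) ++ none :: (g (3 * j - 1) ++ none :: g (3 * j)))
          g j := fun j _ _ => rfl
    have hsol : IsSolution
        (fun j => g (3 * j - 2) ++ none :: (g (3 * j - 1) ++ none :: g (3 * j)))
        (alphaMu n uend w) (betaMu n ustart w') := by
      rw [IsSolution, ← REPAux.alphaEq_corr n uend w htrip,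
        ← REPAux.betaEq_corr n ustart w' htrip]
      exact hg
    refine REPAux.overlapping_of_two_hashes hsol (fun j _ _ => ?_)
    simp only [REPAux.cnt_append, REPAux.cnt_cons_none]
    omega
  · rintro ⟨h, hov⟩
    exact REPAux.converse hov
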